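/- For a Banach space X, the pair (X,X) has property (m) if and only if X has property (M), and the pair (X,X) has property (o) if and only if X has the Opial property. -/

import Mathlib

open Filter Topology

noncomputable def minMod {X Y : Type*} [NormedAddCommGroup X] [NormedSpace ℝ X]
    [NormedAddCommGroup Y] [NormedSpace ℝ Y] (T : X →L[ℝ] Y) : ℝ :=
  sInf {r : ℝ | ∃ x : X, ‖x‖ = 1 ∧ ‖T x‖ = r}

def WeaklyNull {X : Type*} [NormedAddCommGroup X] [NormedSpace ℝ X] (x : ℕ → X) : Prop :=
  ∀ f : X →L[ℝ] ℝ, Tendsto (fun n => f (x n)) atTop (𝓝 0)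

def AttainsMinMod {X Y : Type*} [NormedAddCommGroup X] [NormedSpace ℝ X]
    [NormedAddCommGroup Y] [NormedSpace ℝ Y] (T : X →L[ℝ] Y) : Prop :=
  ∃ x : X, ‖x‖ = 1 ∧ ‖T x‖ = minMod T

def PairPropM (X Y : Type*) [NormedAddCommGroup X] [NormedSpace ℝ X]
    [NormedAddCommGroup Y] [NormedSpace ℝ Y] : Prop :=
  ∀ T : X →L[ℝ] Y, 1 ≤ minMod T →
    ∀ (x : X) (y : Y), ‖x‖ ≤ ‖y‖ → ∀ xs : ℕ → X, WeaklyNull xs →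
      limsup (fun n => ‖x + xs n‖) atTop ≤ limsup (fun n => ‖y + T (xs n)‖) atTop

def PairPropO (X Y : Type*) [NormedAddCommGroup X] [NormedSpace ℝ X]
    [NormedAddCommGroup Y] [NormedSpace ℝ Y] : Prop :=
  ∀ T : X →L[ℝ] Y, 1 ≤ minMod T →
    ∀ y : Y, y ≠ 0 → ∀ xs : ℕ → X, WeaklyNull xs →
      limsup (fun n => ‖xs n‖) atTop < limsup (fun n => ‖y + T (xs n)‖) atTop

def PropertyM (X : Type*) [NormedAddCommGroup X] [NormedSpace ℝ X] : Prop :=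
  ∀ x y : X, ‖y‖ ≤ ‖x‖ → ∀ xs : ℕ → X, WeaklyNull xs →
    limsup (fun n => ‖y + xs n‖) atTop ≤ limsup (fun n => ‖x + xs n‖) atTop

def OpialProperty (X : Type*) [NormedAddCommGroup X] [NormedSpace ℝ X] : Prop :=
  ∀ x : X, x ≠ 0 → ∀ xs : ℕ → X, WeaklyNull xs →
    limsup (fun n => ‖xs n‖) atTop < limsup (fun n => ‖x + xs n‖) atTop

def WeakMinimizingProperty (X Y : Type*) [NormedAddCommGroup X] [NormedSpace ℝ X]
    [NormedAddCommGroup Y] [NormedSpace ℝ Y] : Prop :=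
  ∀ T : X →L[ℝ] Y,
    (∃ xs : ℕ → X, (∀ n, ‖xs n‖ = 1) ∧
      Tendsto (fun n => ‖T (xs n)‖) atTop (𝓝 (minMod T)) ∧ ¬ WeaklyNull xs) →
    AttainsMinMod T

section Aux
variable {X : Type*} [NormedAddCommGroup X] [NormedSpace ℝ X]

variable {X : Type*} [NormedAddCommGroup X] [NormedSpace ℝ X]

lemma weaklyNull_comp (T : X →L[ℝ] X) {xs : ℕ → X} (h : WeaklyNull xs) :
    WeaklyNull (fun n => T (xs n)) := fun f => h (f.comp T)

lemma weaklyNull_bounded {xs : ℕ → X} (h : WeaklyNull xs) : ∃ C, 0 ≤ C ∧ ∀ n, ‖xs n‖ ≤ C := by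
  obtain ⟨C, hC⟩ := banach_steinhaus
      (g := fun n => (NormedSpace.inclusionInDoubleDual ℝ X) (xs n)) (fun f => by
    have h1 : Tendsto (fun n => ‖f (xs n)‖) atTop (𝓝 ‖(0:ℝ)‖) := (h f).norm
    obtain ⟨b, hb⟩ := h1.bddAbove_range
    exact ⟨b, fun n => hb ⟨n, rfl⟩⟩)
  refine ⟨max C 0, le_max_right _ _, fun n => ?_⟩
  have : ‖(NormedSpace.inclusionInDoubleDualLi ℝ (E := X)) (xs n)‖ = ‖xs n‖ :=
    (NormedSpace.inclusionInDoubleDualLi ℝ (E := X)).norm_map (xs n)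
  calc ‖xs n‖ = ‖(NormedSpace.inclusionInDoubleDual ℝ X) (xs n)‖ := this.symm
    _ ≤ C := hC n
    _ ≤ max C 0 := le_max_left _ _

lemma minMod_le {Y : Type*} [NormedAddCommGroup Y] [NormedSpace ℝ Y]
    (T : X →L[ℝ] Y) {u : X} (hu : ‖u‖ = 1) : minMod T ≤ ‖T u‖ := by
  apply csInf_le
  · exact ⟨0, fun r ⟨x, hx, hr⟩ => hr ▸ norm_nonneg _⟩
  · exact ⟨u, hu, rfl⟩

lemma minMod_mul_norm_le {Y : Type*} [NormedAddCommGroup Y] [NormedSpace ℝ Y]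
    (T : X →L[ℝ] Y) (z : X) : minMod T * ‖z‖ ≤ ‖T z‖ := by
  rcases eq_or_ne z 0 with rfl | hz
  · simp
  · have hnz : ‖z‖ ≠ 0 := norm_ne_zero_iff.2 hz
    have hu : ‖(‖z‖⁻¹ • z)‖ = 1 := norm_smul_inv_norm hz
    have h1 := minMod_le T hu
    have h2 : ‖T (‖z‖⁻¹ • z)‖ = ‖z‖⁻¹ * ‖T z‖ := by
      rw [map_smul, norm_smul, norm_inv, norm_norm]
    rw [h2] at h1
    have := mul_le_mul_of_nonneg_right h1 (norm_nonneg z)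
    calc minMod T * ‖z‖ ≤ ‖z‖⁻¹ * ‖T z‖ * ‖z‖ := this
      _ = ‖T z‖ := by field_simp

lemma bddu (v : X) {zs : ℕ → X} {C : ℝ} (h : ∀ n, ‖zs n‖ ≤ C) :
    IsBoundedUnder (· ≤ ·) atTop (fun n => ‖v + zs n‖) :=
  isBoundedUnder_of ⟨‖v‖ + C, fun n => (norm_add_le _ _).trans (by linarith [h n])⟩

lemma bddl (v : X) (zs : ℕ → X) :
    IsBoundedUnder (· ≥ ·) atTop (fun n => ‖v + zs n‖) :=
  isBoundedUnder_of ⟨0, fun _ => norm_nonneg _⟩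

lemma cobdd (v : X) (zs : ℕ → X) :
    IsCoboundedUnder (· ≤ ·) atTop (fun n => ‖v + zs n‖) :=
  (bddl v zs).isCoboundedUnder_le

lemma limsup_const_mul_le {a : ℕ → ℝ} {c : ℝ} (hc : 0 ≤ c) (h0 : ∀ n, 0 ≤ a n)
    {C : ℝ} (hbd : ∀ n, a n ≤ C) :
    limsup (fun n => c * a n) atTop ≤ c * limsup a atTop := by
  have h := limsup_mul_le (f := atTop) (u := fun _ : ℕ => c) (v := a)
    (Eventually.of_forall fun _ => hc).frequently (isBoundedUnder_of ⟨c, fun _ => le_rfl⟩)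
    (Eventually.of_forall h0) (isBoundedUnder_of ⟨C, hbd⟩)
  rw [limsup_const c] at h
  exact h

set_option maxHeartbeats 2000000 in
lemma key (hM : PropertyM X) (T : X →L[ℝ] X) (hT : 1 ≤ minMod T)
    (x y : X) (hxy : ‖x‖ ≤ ‖y‖) (xs : ℕ → X) (hxs : WeaklyNull xs) :
    limsup (fun n => ‖x + xs n‖) atTop ≤ limsup (fun n => ‖y + T (xs n)‖) atTop := by
  obtain ⟨C, hC0, hC⟩ := weaklyNull_bounded hxs
  set m := minMod T with hmdef
  have hm0 : (0:ℝ) < m := lt_of_lt_of_le one_pos hT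
  have hz : ∀ z : X, ‖z‖ ≤ ‖T z‖ := fun z =>
    calc ‖z‖ = 1 * ‖z‖ := (one_mul _).symm
      _ ≤ m * ‖z‖ := mul_le_mul_of_nonneg_right hT (norm_nonneg z)
      _ ≤ ‖T z‖ := minMod_mul_norm_le T z
  have hTxs : WeaklyNull (fun n => T (xs n)) := weaklyNull_comp T hxs
  have hTC : ∀ n, ‖T (xs n)‖ ≤ ‖T‖ * C := fun n =>
    (T.le_opNorm (xs n)).trans (mul_le_mul_of_nonneg_left (hC n) (norm_nonneg (T : X →L[ℝ] X)))
  have hS : Set.Nonempty {r : ℝ | ∃ x : X, ‖x‖ = 1 ∧ ‖T x‖ = r} := by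
    by_contra h
    rw [Set.not_nonempty_iff_eq_empty] at h
    have h0 : m = 0 := by rw [hmdef, minMod, h, Real.sInf_empty]
    linarith
  rcases eq_or_ne y 0 with rfl | hy
  · have hx0 : x = 0 := norm_le_zero_iff.1 (by simpa using hxy)
    subst hx0
    refine limsup_le_limsup (Eventually.of_forall fun n => ?_) (cobdd 0 xs)
      (bddu (0:X) (fun n => hTC n))
    simpa using hz (xs n)
  · have hy0 : (0:ℝ) < ‖y‖ := norm_pos_iff.2 hy
    rcases eq_or_ne x 0 with rfl | hx
    · have h1 : limsup (fun n => ‖(0:X) + xs n‖) atTop ≤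
          limsup (fun n => ‖(0:X) + T (xs n)‖) atTop := by
        refine limsup_le_limsup (Eventually.of_forall fun n => ?_) (cobdd 0 xs)
          (bddu (0:X) (fun n => hTC n))
        simpa using hz (xs n)
      have h2 := hM y 0 (by simpa using norm_nonneg y) (fun n => T (xs n)) hTxs
      exact h1.trans h2
    · have hx0 : (0:ℝ) < ‖x‖ := norm_pos_iff.2 hx
      apply le_of_forall_pos_le_add
      intro ε hε
      set d := min ε (‖y‖ / 2) with hddef
      have hd0 : 0 < d := lt_min hε (by linarith)
      have hdy : d ≤ ‖y‖ / 2 := min_le_right _ _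
      have hdε : d ≤ ε := min_le_left _ _
      set s := min ‖x‖ (‖y‖ - d) with hsdef
      have hs0 : 0 < s := lt_min hx0 (by linarith)
      have hsx : s ≤ ‖x‖ := min_le_left _ _
      have hsy : s < ‖y‖ := (min_le_right _ _).trans_lt (by linarith)
      have hxs_eps : ‖x‖ - s ≤ ε := by
        rcases le_total ‖x‖ (‖y‖ - d) with h | h
        · rw [hsdef, min_eq_left h]; linarith
        · rw [hsdef, min_eq_right h]; linarith
      -- almost-minimal unit vector
      have hlt : m < m * ‖y‖ / s := by
        rw [mul_div_assoc]
        exact lt_mul_of_one_lt_right hm0 ((one_lt_div hs0).2 hsy)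
      have hlt' : sInf {r : ℝ | ∃ x : X, ‖x‖ = 1 ∧ ‖T x‖ = r} < m * ‖y‖ / s := hlt
      obtain ⟨r, hrS, hrlt⟩ := exists_lt_of_csInf_lt hS hlt'
      obtain ⟨u, hu1, hur⟩ := hrS
      -- intermediate vectors
      set x' : X := (s / ‖x‖) • x with hx'def
      have hx' : ‖x'‖ = s := by
        rw [hx'def, norm_smul, Real.norm_eq_abs, abs_of_nonneg (by positivity),
          div_mul_cancel₀ _ (ne_of_gt hx0)]
      have hsu : ‖s • u‖ = s := by
        rw [norm_smul, Real.norm_eq_abs, abs_of_nonneg hs0.le, hu1, mul_one]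
      have hxx' : ‖x - x'‖ = ‖x‖ - s := by
        have : x - x' = (1 - s / ‖x‖) • x := by
          rw [hx'def, sub_smul, one_smul]
        rw [this, norm_smul, Real.norm_eq_abs,
          abs_of_nonneg (by rw [sub_nonneg]; exact (div_le_one hx0).2 hsx)]
        field_simp
      set w : X := (m⁻¹ * s) • T u with hwdef
      have hwy : ‖w‖ ≤ ‖y‖ := by
        have hTu : ‖T u‖ < m * ‖y‖ / s := hur ▸ hrlt
        have : ‖w‖ = m⁻¹ * s * ‖T u‖ := by
          rw [hwdef, norm_smul, Real.norm_eq_abs, abs_of_nonneg (by positivity)]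
        rw [this]
        have h2 : m⁻¹ * s * ‖T u‖ ≤ m⁻¹ * s * (m * ‖y‖ / s) :=
          mul_le_mul_of_nonneg_left hTu.le (by positivity)
        calc m⁻¹ * s * ‖T u‖ ≤ m⁻¹ * s * (m * ‖y‖ / s) := h2
          _ = ‖y‖ := by field_simp
      set zs : ℕ → X := fun n => m⁻¹ • T (xs n) with hzsdef
      have hzsw : WeaklyNull zs := weaklyNull_comp ((m⁻¹ : ℝ) • T) hxs
      have hzsC : ∀ n, ‖zs n‖ ≤ m⁻¹ * (‖T‖ * C) := fun n => by
        rw [hzsdef, norm_smul, Real.norm_eq_abs, abs_of_nonneg (by positivity)]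
        exact mul_le_mul_of_nonneg_left (hTC n) (by positivity)
      -- step 3 pointwise
      have step3 : ∀ n, ‖s • u + xs n‖ ≤ ‖w + zs n‖ := by
        intro n
        have h1 : m * ‖s • u + xs n‖ ≤ ‖T (s • u + xs n)‖ := minMod_mul_norm_le T _
        have h2 : m⁻¹ • T (s • u + xs n) = w + zs n := by
          rw [map_add, map_smul, smul_add, smul_smul, hwdef, hzsdef]
        have h3 : ‖w + zs n‖ = m⁻¹ * ‖T (s • u + xs n)‖ := by
          rw [← h2, norm_smul, Real.norm_eq_abs, abs_of_nonneg (by positivity)]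
        rw [h3, inv_mul_eq_div, le_div_iff₀ hm0]
        linarith [h1]
      -- step 5 : limsup ‖y + zs n‖ ≤ limsup ‖y + T xs n‖
      set A := limsup (fun n => ‖y + T (xs n)‖) atTop with hAdef
      have step5 : limsup (fun n => ‖y + zs n‖) atTop ≤ A := by
        set lam : ℝ := (1 + m⁻¹) / 2 with hlamdef
        have hminv1 : m⁻¹ ≤ 1 := by
          rw [inv_le_one_iff₀]; right; exact hT
        have hlam0 : 0 ≤ lam := by positivity
        have hlam1 : 0 ≤ 1 - lam := by rw [hlamdef]; linarith
        have hptw : ∀ n, ‖y + zs n‖ ≤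
            lam * ‖y + T (xs n)‖ + (1 - lam) * ‖y - T (xs n)‖ := by
          intro n
          have hdec : y + zs n = lam • (y + T (xs n)) + (1 - lam) • (y - T (xs n)) := by
            rw [hzsdef, hlamdef]
            match_scalars <;> field_simp <;> ring
          calc ‖y + zs n‖ ≤ ‖lam • (y + T (xs n))‖ + ‖(1 - lam) • (y - T (xs n))‖ := by
                rw [hdec]; exact norm_add_le _ _
            _ = lam * ‖y + T (xs n)‖ + (1 - lam) * ‖y - T (xs n)‖ := by
                rw [norm_smul, norm_smul, Real.norm_eq_abs, Real.norm_eq_abs,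
                  abs_of_nonneg hlam0, abs_of_nonneg hlam1]
        have hBeq : (fun n => ‖y - T (xs n)‖) = fun n => ‖-y + T (xs n)‖ := by
          funext n; rw [norm_sub_rev, sub_eq_neg_add]
        have hB : limsup (fun n => ‖y - T (xs n)‖) atTop ≤ A := by
          rw [hBeq]
          exact hM y (-y) (by simp) (fun n => T (xs n)) hTxs
        have hsplit : limsup (fun n => lam * ‖y + T (xs n)‖ + (1 - lam) * ‖y - T (xs n)‖) atTop ≤
            lam * A + (1 - lam) * limsup (fun n => ‖y - T (xs n)‖) atTop := by
          have h1 : limsup (fun n => lam * ‖y + T (xs n)‖) atTop ≤ lam * A :=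
            limsup_const_mul_le hlam0 (fun n => norm_nonneg _) (C := ‖y‖ + ‖T‖ * C) (fun n => by
              linarith [norm_add_le y (T (xs n)), hTC n])
          have h2 : limsup (fun n => (1 - lam) * ‖y - T (xs n)‖) atTop ≤
              (1 - lam) * limsup (fun n => ‖y - T (xs n)‖) atTop :=
            limsup_const_mul_le hlam1 (fun n => norm_nonneg _) (C := ‖y‖ + ‖T‖ * C) (fun n => by
              linarith [norm_sub_le y (T (xs n)), hTC n])
          have hadd := limsup_add_le (f := atTop)
            (u := fun n => lam * ‖y + T (xs n)‖) (v := fun n => (1 - lam) * ‖y - T (xs n)‖)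
            (isBoundedUnder_of ⟨0, fun n => by positivity⟩)
            (isBoundedUnder_of ⟨lam * (‖y‖ + ‖T‖ * C), fun n => by
              have := norm_add_le y (T (xs n)); nlinarith [hTC n]⟩)
            ((isBoundedUnder_of (r := (· ≥ ·)) ⟨0, fun n => by positivity⟩).isCoboundedUnder_le)
            (isBoundedUnder_of ⟨(1 - lam) * (‖y‖ + ‖T‖ * C), fun n => by
              have := norm_sub_le y (T (xs n)); nlinarith [hTC n]⟩)
          calc limsup (fun n => lam * ‖y + T (xs n)‖ + (1 - lam) * ‖y - T (xs n)‖) atTop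
              = limsup ((fun n => lam * ‖y + T (xs n)‖) + fun n => (1 - lam) * ‖y - T (xs n)‖)
                atTop := rfl
            _ ≤ _ := hadd
            _ ≤ lam * A + (1 - lam) * limsup (fun n => ‖y - T (xs n)‖) atTop := by
                gcongr
        have hmono : limsup (fun n => ‖y + zs n‖) atTop ≤
            limsup (fun n => lam * ‖y + T (xs n)‖ + (1 - lam) * ‖y - T (xs n)‖) atTop := by
          refine limsup_le_limsup (Eventually.of_forall hptw) (cobdd y zs)
            (isBoundedUnder_of ⟨lam * (‖y‖ + ‖T‖ * C) + (1 - lam) * (‖y‖ + ‖T‖ * C), fun n => by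
              have h1 := norm_add_le y (T (xs n)); have h2 := norm_sub_le y (T (xs n))
              nlinarith [hTC n]⟩)
        have hlast := mul_le_mul_of_nonneg_left hB hlam1
        calc limsup (fun n => ‖y + zs n‖) atTop ≤ _ := hmono
          _ ≤ lam * A + (1 - lam) * limsup (fun n => ‖y - T (xs n)‖) atTop := hsplit
          _ ≤ lam * A + (1 - lam) * A := by linarith
          _ = A := by ring
      -- now chain everything
      have c1 : limsup (fun n => ‖x + xs n‖) atTop ≤
          limsup (fun n => ‖x' + xs n‖) atTop + (‖x‖ - s) := by
        have heq := limsup_add_const atTop (fun n => ‖x' + xs n‖) (‖x‖ - s)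
          (bddu x' hC) (cobdd x' xs)
        rw [← heq]
        refine limsup_le_limsup (Eventually.of_forall fun n => ?_) (cobdd x xs)
          (isBoundedUnder_of ⟨(‖x'‖ + C) + (‖x‖ - s), fun n => by
            have := norm_add_le x' (xs n); have := hC n; nlinarith⟩)
        have : ‖x + xs n‖ ≤ ‖x' + xs n‖ + ‖x - x'‖ := by
          have hrw : x + xs n = (x' + xs n) + (x - x') := by abel
          rw [hrw]; exact norm_add_le _ _
        rw [hxx'] at this; exact this
      have c2 : limsup (fun n => ‖x' + xs n‖) atTop ≤ limsup (fun n => ‖s • u + xs n‖) atTop :=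
        hM (s • u) x' (by rw [hx', hsu]) xs hxs
      have c3 : limsup (fun n => ‖s • u + xs n‖) atTop ≤ limsup (fun n => ‖w + zs n‖) atTop :=
        limsup_le_limsup (Eventually.of_forall step3) (cobdd _ xs) (bddu w hzsC)
      have c4 : limsup (fun n => ‖w + zs n‖) atTop ≤ limsup (fun n => ‖y + zs n‖) atTop :=
        hM y w hwy zs hzsw
      calc limsup (fun n => ‖x + xs n‖) atTop
          ≤ limsup (fun n => ‖x' + xs n‖) atTop + (‖x‖ - s) := c1
        _ ≤ limsup (fun n => ‖y + zs n‖) atTop + (‖x‖ - s) := by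
            have := c2.trans (c3.trans c4); linarith
        _ ≤ A + ε := by linarith [step5]


lemma minMod_id (h : ∃ z : X, z ≠ 0) : minMod (ContinuousLinearMap.id ℝ X) = 1 := by
  obtain ⟨z, hz⟩ := h
  have hu : ‖(‖z‖⁻¹ • z)‖ = 1 := norm_smul_inv_norm hz
  have hset : {r : ℝ | ∃ x : X, ‖x‖ = 1 ∧ ‖(ContinuousLinearMap.id ℝ X) x‖ = r} = {1} := by
    ext r
    simp only [Set.mem_setOf_eq, ContinuousLinearMap.id_apply, Set.mem_singleton_iff]
    constructor
    · rintro ⟨x, h1, h2⟩; rw [← h2, h1]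
    · rintro rfl; exact ⟨_, hu, hu⟩
  rw [minMod, hset, csInf_singleton]

end Aux

theorem stmt11aux {X : Type*} [NormedAddCommGroup X] [NormedSpace ℝ X] [CompleteSpace X] :
    (PairPropM X X ↔ PropertyM X) ∧ (PairPropO X X ↔ OpialProperty X) := by
  constructor
  · constructor
    · intro hP x y hyx xs hxs
      by_cases htriv : ∀ z : X, z = 0
      · rw [htriv x, htriv y]
      · push_neg at htriv
        have h := hP (ContinuousLinearMap.id ℝ X) (minMod_id htriv).ge y x hyx xs hxs
        simpa using h
    · intro hM T hT x y hxy xs hxs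
      exact key hM T hT x y hxy xs hxs
  · constructor
    · intro hP x hx xs hxs
      have h := hP (ContinuousLinearMap.id ℝ X) (minMod_id ⟨x, hx⟩).ge x hx xs hxs
      simpa using h
    · intro hO T hT y hy xs hxs
      obtain ⟨C, hC0, hC⟩ := weaklyNull_bounded hxs
      have hz : ∀ z : X, ‖z‖ ≤ ‖T z‖ := fun z =>
        calc ‖z‖ = 1 * ‖z‖ := (one_mul _).symm
          _ ≤ minMod T * ‖z‖ := mul_le_mul_of_nonneg_right hT (norm_nonneg z)
          _ ≤ ‖T z‖ := minMod_mul_norm_le T z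
      have hTC : ∀ n, ‖T (xs n)‖ ≤ ‖T‖ * C := fun n =>
        (T.le_opNorm (xs n)).trans
          (mul_le_mul_of_nonneg_left (hC n) (norm_nonneg (T : X →L[ℝ] X)))
      have h1 : limsup (fun n => ‖xs n‖) atTop ≤ limsup (fun n => ‖T (xs n)‖) atTop :=
        limsup_le_limsup (Eventually.of_forall fun n => hz (xs n))
          ((isBoundedUnder_of (r := (· ≥ ·)) ⟨0, fun _ => norm_nonneg _⟩).isCoboundedUnder_le)
          (isBoundedUnder_of ⟨‖T‖ * C, hTC⟩)
      exact lt_of_le_of_lt h1 (hO y hy (fun n => T (xs n)) (weaklyNull_comp T hxs))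

theorem stmt11 {X : Type*} [NormedAddCommGroup X] [NormedSpace ℝ X] [CompleteSpace X] :
    (PairPropM X X ↔ PropertyM X) ∧ (PairPropO X X ↔ OpialProperty X) := stmt11aux
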